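/- Let N ≥ 3, let μ be a nonzero Radon measure on ℝ^N with support contained in the open half space ℝ^N_+ and finite Newtonian potential, let 1 < k < N-1, and let 0 < p < (N-1)/(k-1). Then for every λ > 0 the problem (1.1) has no positive solution. -/

import Mathlib

open MeasureTheory ENNReal Filter
open Metric

noncomputable section

/-- The point `(y', t) ∈ ℝ^N` for `y' ∈ ℝ^{N-1}`, `t ∈ ℝ`. -/
def up (N : ℕ) (y' : EuclideanSpace ℝ (Fin (N - 1))) (t : ℝ) : EuclideanSpace ℝ (Fin N) :=
  (WithLp.equiv 2 (Fin N → ℝ)).symm fun i => if h : (i : ℕ) < N - 1 then y' ⟨i, h⟩ else t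

/-- The last coordinate `x_N` of `x ∈ ℝ^N`. -/
def ht (N : ℕ) (x : EuclideanSpace ℝ (Fin N)) : ℝ :=
  if h : N - 1 < N then x ⟨N - 1, h⟩ else 0

/-- Reflection `x̄ = (x', -x_N)` of `x = (x', x_N)` in the hyperplane `x_N = 0`. -/
def reflN (N : ℕ) (x : EuclideanSpace ℝ (Fin N)) : EuclideanSpace ℝ (Fin N) :=
  (WithLp.equiv 2 (Fin N → ℝ)).symm fun i => if (i : ℕ) < N - 1 then x i else -x i

/-- Surface area `σ_N` of the unit sphere in `ℝ^N` (equal to `N` times the unit ball volume). -/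
def sphereArea (N : ℕ) : ℝ :=
  N * (volume (Metric.ball (0 : EuclideanSpace ℝ (Fin N)) 1)).toReal

/-- The open upper half space `ℝ^N_+ = ℝ^{N-1} × (0,∞)`. -/
def upperHalf (N : ℕ) : Set (EuclideanSpace ℝ (Fin N)) := {x | 0 < ht N x}

/-- `H_u(x') = ∫_{ℝ^{N-1}} u(y',0)^p |x'-y'|^{-k} dy'`. -/
def Hu (N : ℕ) (p k : ℝ) (u : EuclideanSpace ℝ (Fin N) → ℝ)
    (x' : EuclideanSpace ℝ (Fin (N - 1))) : ℝ≥0∞ :=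
  ∫⁻ y', ENNReal.ofReal (u (up N y' 0)) ^ p * ENNReal.ofReal ‖x' - y'‖ ^ (-k)

/-- The Newtonian potential `U^ν(x) = (1/((N-2)σ_N)) ∫ |x-y|^{2-N} dν(y)`. -/
def NewtPot (N : ℕ) (ν : Measure (EuclideanSpace ℝ (Fin N)))
    (x : EuclideanSpace ℝ (Fin N)) : ℝ :=
  (((N : ℝ) - 2) * sphereArea N)⁻¹ * (∫⁻ y, ENNReal.ofReal ‖x - y‖ ^ ((2:ℝ) - N) ∂ν).toReal

/-- The Green potential `∫_{ℝ^N_+} G(x,y) dμ(y)` for the Neumann Green function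
`G(x,y) = (|x-y|^{2-N} + |x̄-y|^{2-N})/((N-2)σ_N)` of the half space. -/
def GreenPot (N : ℕ) (μ : Measure (EuclideanSpace ℝ (Fin N)))
    (x : EuclideanSpace ℝ (Fin N)) : ℝ :=
  (((N : ℝ) - 2) * sphereArea N)⁻¹ *
    (∫⁻ y, (ENNReal.ofReal ‖x - y‖ ^ ((2:ℝ) - N)
          + ENNReal.ofReal ‖reflN N x - y‖ ^ ((2:ℝ) - N)) ∂μ).toReal

/-- `μ` is a nonzero Radon (locally finite Borel) measure whose support is contained in the
open upper half space and whose Newtonian potential is finite everywhere. -/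
def AdmissibleMeasure (N : ℕ) (μ : Measure (EuclideanSpace ℝ (Fin N))) : Prop :=
  μ ≠ 0 ∧ IsLocallyFiniteMeasure μ ∧
    (∃ F : Set (EuclideanSpace ℝ (Fin N)), IsClosed F ∧ F ⊆ upperHalf N ∧ μ Fᶜ = 0) ∧
    (∀ x, (∫⁻ y, ENNReal.ofReal ‖x - y‖ ^ ((2:ℝ) - N) ∂μ) < ⊤)

/-- A measurable function `u` is a positive solution of problem (1.1):
(i) `u > 0` a.e. in `ℝ^N_+`, and for a.e. `x' ∈ ℝ^{N-1}`, `u(z) → u(x',0)` as `z → (x',0)`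
with `z ∈ ℝ^N_+`;
(ii) `H_u < ∞` a.e. in `ℝ^{N-1}`, and `∫_{ℝ^{N-1}} H_u(y')|x-(y',0)|^{2-N} dy' < ∞` for
a.e. `x ∈ ℝ^N_+`;
(iii) `u(x) = ∫_{ℝ^N_+} G(x,y) dμ(y)
　　　　+ (2λ/((N-2)σ_N)) ∫∫ u(z',0)^p |x-(y',0)|^{2-N} |y'-z'|^{-k} dz' dy'`
for a.e. `x ∈ ℝ^N_+`. -/
def IsPosSolution (N : ℕ) (p lam k : ℝ) (μ : Measure (EuclideanSpace ℝ (Fin N)))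
    (u : EuclideanSpace ℝ (Fin N) → ℝ) : Prop :=
  Measurable u ∧
  (∀ᵐ x ∂(volume.restrict (upperHalf N)), 0 < u x) ∧
  (∀ᵐ x' ∂(volume : Measure (EuclideanSpace ℝ (Fin (N - 1)))),
    Tendsto u (nhdsWithin (up N x' 0) (upperHalf N)) (nhds (u (up N x' 0)))) ∧
  (∀ᵐ x' ∂(volume : Measure (EuclideanSpace ℝ (Fin (N - 1)))), Hu N p k u x' < ⊤) ∧
  (∀ᵐ x ∂(volume.restrict (upperHalf N)),
    (∫⁻ y', Hu N p k u y' * ENNReal.ofReal ‖x - up N y' 0‖ ^ ((2:ℝ) - N)) < ⊤) ∧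
  (∀ᵐ x ∂(volume.restrict (upperHalf N)),
    ENNReal.ofReal (u x) =
      ENNReal.ofReal (((N : ℝ) - 2) * sphereArea N)⁻¹ *
        (∫⁻ y, (ENNReal.ofReal ‖x - y‖ ^ ((2:ℝ) - N)
              + ENNReal.ofReal ‖reflN N x - y‖ ^ ((2:ℝ) - N)) ∂μ) +
      ENNReal.ofReal (2 * lam / (((N : ℝ) - 2) * sphereArea N)) *
        ∫⁻ y', ENNReal.ofReal ‖x - up N y' 0‖ ^ ((2:ℝ) - N) * Hu N p k u y')

/-- A measurable function `u` is a positive solution of problem (1.1) with `μ ≡ 0`: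
conditions (i), (ii) as above and
(iii) `u(x) = (2λ/((N-2)σ_N)) ∫∫ u(z',0)^p |x-(y',0)|^{2-N} |y'-z'|^{-k} dz' dy'`
for a.e. `x ∈ ℝ^N_+`. -/
def IsPosSolution0 (N : ℕ) (p lam k : ℝ) (u : EuclideanSpace ℝ (Fin N) → ℝ) : Prop :=
  Measurable u ∧
  (∀ᵐ x ∂(volume.restrict (upperHalf N)), 0 < u x) ∧
  (∀ᵐ x' ∂(volume : Measure (EuclideanSpace ℝ (Fin (N - 1)))),
    Tendsto u (nhdsWithin (up N x' 0) (upperHalf N)) (nhds (u (up N x' 0)))) ∧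
  (∀ᵐ x' ∂(volume : Measure (EuclideanSpace ℝ (Fin (N - 1)))), Hu N p k u x' < ⊤) ∧
  (∀ᵐ x ∂(volume.restrict (upperHalf N)),
    (∫⁻ y', Hu N p k u y' * ENNReal.ofReal ‖x - up N y' 0‖ ^ ((2:ℝ) - N)) < ⊤) ∧
  (∀ᵐ x ∂(volume.restrict (upperHalf N)),
    ENNReal.ofReal (u x) =
      ENNReal.ofReal (2 * lam / (((N : ℝ) - 2) * sphereArea N)) *
        ∫⁻ y', ENNReal.ofReal ‖x - up N y' 0‖ ^ ((2:ℝ) - N) * Hu N p k u y')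

/-- The boundary trace `x' ↦ u(x',0)` belongs to `L^q_loc(ℝ^{N-1})`. -/
def BdryLocLp (N : ℕ) (q : ℝ) (u : EuclideanSpace ℝ (Fin N) → ℝ) : Prop :=
  ∀ K : Set (EuclideanSpace ℝ (Fin (N - 1))), IsCompact K →
    MemLp (fun x' => u (up N x' 0)) (ENNReal.ofReal q) (volume.restrict K)


lemma up_apply (N : ℕ) (y' : EuclideanSpace ℝ (Fin (N-1))) (t : ℝ) (i : Fin N) :
    up N y' t i = if h : (i : ℕ) < N - 1 then y' ⟨i, h⟩ else t := rfl

lemma ht_up (N : ℕ) (hN : 1 ≤ N) (y' : EuclideanSpace ℝ (Fin (N-1))) (t : ℝ) :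
    ht N (up N y' t) = t := by
  have h : N - 1 < N := by omega
  simp [ht, h, up_apply]

lemma norm_up_sub_up (N : ℕ) (hN : 1 ≤ N) (x' y' : EuclideanSpace ℝ (Fin (N-1))) (t s : ℝ) :
    ‖up N x' t - up N y' s‖ = Real.sqrt (‖x' - y'‖ ^ 2 + (t - s) ^ 2) := by
  obtain ⟨M, rfl⟩ : ∃ M, N = M + 1 := ⟨N - 1, by omega⟩
  rw [EuclideanSpace.norm_eq]
  have hsq : ‖x' - y'‖ ^ 2 = ∑ i : Fin M, ‖(x' - y') i‖ ^ 2 := by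
    rw [EuclideanSpace.norm_eq]
    exact Real.sq_sqrt (Finset.sum_nonneg fun i _ => sq_nonneg _)
  rw [hsq]
  congr 1
  rw [Fin.sum_univ_castSucc]
  congr 1
  · refine Finset.sum_congr rfl fun i _ => ?_
    have hc : ((i.castSucc : Fin (M+1)) : ℕ) < M + 1 - 1 := by simpa using i.isLt
    have he : (⟨((i.castSucc : Fin (M+1)) : ℕ), hc⟩ : Fin (M+1-1)) = i := Fin.ext (by simp)
    simp only [PiLp.sub_apply, up_apply, dif_pos hc]
    rw [he]
  · have hc : ¬ ((Fin.last M : Fin (M+1)) : ℕ) < M + 1 - 1 := by simp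
    simp only [PiLp.sub_apply, up_apply, dif_neg hc]
    rw [Real.norm_eq_abs, sq_abs]

lemma norm_up_sub_up_zero (N : ℕ) (hN : 1 ≤ N) (x' y' : EuclideanSpace ℝ (Fin (N-1))) :
    ‖up N x' 0 - up N y' 0‖ = ‖x' - y'‖ := by
  rw [norm_up_sub_up N hN, sub_self]
  simp [Real.sqrt_sq_eq_abs]

lemma norm_up_same (N : ℕ) (hN : 1 ≤ N) (x' : EuclideanSpace ℝ (Fin (N-1))) (t s : ℝ) :
    ‖up N x' t - up N x' s‖ = |t - s| := by
  rw [norm_up_sub_up N hN, sub_self]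
  simp [Real.sqrt_sq_eq_abs]

lemma norm_up_zero (N : ℕ) (hN : 1 ≤ N) (x' : EuclideanSpace ℝ (Fin (N-1))) :
    ‖up N x' 0‖ = ‖x'‖ := by
  have h0 : up N (0 : EuclideanSpace ℝ (Fin (N-1))) 0 = 0 := by
    apply PiLp.ext; intro i
    rw [up_apply]; split <;> rfl
  calc ‖up N x' 0‖ = ‖up N x' 0 - up N 0 0‖ := by rw [h0, sub_zero]
  _ = ‖x' - 0‖ := norm_up_sub_up_zero N hN x' 0
  _ = ‖x'‖ := by rw [sub_zero]

lemma up_measurable (N : ℕ) : Measurable (fun y' : EuclideanSpace ℝ (Fin (N-1)) => up N y' 0) := by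
  show Measurable fun y' : EuclideanSpace ℝ (Fin (N-1)) =>
    WithLp.toLp 2 (fun i : Fin N => if h : (i : ℕ) < N - 1 then y' ⟨i, h⟩ else (0:ℝ))
  apply (WithLp.measurable_toLp 2 _).comp
  apply measurable_pi_iff.mpr
  intro i
  by_cases h : (i : ℕ) < N - 1
  · simp only [up_apply, h, dif_pos]
    exact (measurable_pi_apply _).comp (WithLp.measurable_ofLp 2 _)
  · simp only [up_apply, h, dif_neg, not_false_iff]
    exact measurable_const

lemma upperHalf_isOpen (N : ℕ) : IsOpen (upperHalf N) := by
  by_cases h : N - 1 < N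
  · have : upperHalf N = (fun x : EuclideanSpace ℝ (Fin N) => x ⟨N-1, h⟩) ⁻¹' (Set.Ioi 0) := by
      ext x; simp [upperHalf, ht, h, Set.mem_preimage]
    rw [this]
    exact (isOpen_Ioi).preimage ((continuous_apply _).comp (PiLp.continuous_ofLp 2 _))
  · have : upperHalf N = ∅ := by
      ext x; simp [upperHalf, ht, h]
    simp [this]

lemma ker_anti {a b e : ℝ} (ha : 0 < a) (hab : a ≤ b) (he : e ≤ 0) :
    ENNReal.ofReal b ^ e ≤ ENNReal.ofReal a ^ e := by
  have hrw : ∀ x : ℝ≥0∞, x ^ e = (x ^ (-e))⁻¹ := fun x => by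
    rw [← ENNReal.rpow_neg, neg_neg]
  rw [hrw, hrw]
  exact ENNReal.inv_le_inv'
    (ENNReal.rpow_le_rpow (ENNReal.ofReal_le_ofReal hab) (neg_nonneg.mpr he))

lemma ker_lb {b r e : ℝ} (hb : 0 < b) (hr : 0 ≤ r) (hrb : r ≤ b) (he : e ≤ 0) :
    ENNReal.ofReal b ^ e ≤ ENNReal.ofReal r ^ e := by
  rcases eq_or_lt_of_le hr with h0 | hpos
  · rcases he.lt_or_eq with hneg | he0
    · rw [← h0, ENNReal.ofReal_zero, ENNReal.zero_rpow_of_neg hneg]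
      exact le_top
    · rw [he0]; simp
  · exact ker_anti hpos hrb he

lemma euclid_nontrivial (d : ℕ) (hd : 1 ≤ d) : Nontrivial (EuclideanSpace ℝ (Fin d)) := by
  refine ⟨EuclideanSpace.single (⟨0, by omega⟩ : Fin d) (1 : ℝ), 0, fun h => ?_⟩
  have := congrArg (fun v : EuclideanSpace ℝ (Fin d) => v (⟨0, by omega⟩ : Fin d)) h
  simpa using this

lemma conv_core (d : ℕ) (hd : 1 ≤ d) {A K : ℝ} (hA : 0 ≤ A) (hK : 0 ≤ K)
    {W : EuclideanSpace ℝ (Fin d) → ℝ≥0∞} {c : ℝ≥0∞}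
    (hW : ∀ᵐ z' ∂(volume : Measure (EuclideanSpace ℝ (Fin d))),
      c * ENNReal.ofReal (1 + ‖z'‖) ^ (-A) ≤ W z')
    (y' : EuclideanSpace ℝ (Fin d)) {r Rw Rk : ℝ} (hr : 0 < r) (hRw : 0 < Rw) (hRk : 0 < Rk)
    (hw : ∀ z' : EuclideanSpace ℝ (Fin d), ‖z'‖ < r → 1 + ‖z'‖ ≤ Rw)
    (hk : ∀ z' : EuclideanSpace ℝ (Fin d), ‖z'‖ < r → ‖y' - z'‖ ≤ Rk) :
    c * ENNReal.ofReal Rw ^ (-A) * ENNReal.ofReal Rk ^ (-K) *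
      (ENNReal.ofReal (r ^ d) * volume (ball (0 : EuclideanSpace ℝ (Fin d)) 1)) ≤
      ∫⁻ z', W z' * ENNReal.ofReal ‖y' - z'‖ ^ (-K) := by
  haveI := euclid_nontrivial d hd
  have hvol : volume (ball (0 : EuclideanSpace ℝ (Fin d)) r)
      = ENNReal.ofReal (r ^ d) * volume (ball (0 : EuclideanSpace ℝ (Fin d)) 1) := by
    rw [Measure.addHaar_ball _ _ hr.le, finrank_euclideanSpace_fin]
  rw [← hvol]
  refine le_trans ?_ (setLIntegral_le_lintegral (ball (0 : EuclideanSpace ℝ (Fin d)) r) _)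
  rw [← setLIntegral_const]
  refine lintegral_mono_ae ?_
  filter_upwards [ae_restrict_of_ae hW, ae_restrict_mem measurableSet_ball] with z' h1 h2
  have hz : ‖z'‖ < r := by rwa [mem_ball, dist_zero_right] at h2
  have e1 : ENNReal.ofReal Rw ^ (-A) ≤ ENNReal.ofReal (1 + ‖z'‖) ^ (-A) :=
    ker_anti (by positivity) (hw z' hz) (by linarith)
  have e2 : ENNReal.ofReal Rk ^ (-K) ≤ ENNReal.ofReal ‖y' - z'‖ ^ (-K) :=
    ker_lb hRk (norm_nonneg _) (hk z' hz) (by linarith)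
  calc c * ENNReal.ofReal Rw ^ (-A) * ENNReal.ofReal Rk ^ (-K)
      ≤ (c * ENNReal.ofReal (1 + ‖z'‖) ^ (-A)) * ENNReal.ofReal ‖y' - z'‖ ^ (-K) :=
        mul_le_mul' (mul_le_mul' le_rfl e1) e2
    _ ≤ W z' * ENNReal.ofReal ‖y' - z'‖ ^ (-K) := mul_le_mul_left h1 _

lemma conv_lb (d : ℕ) (hd : 1 ≤ d) {A K : ℝ} (hA : 0 ≤ A) (hK : 0 ≤ K)
    {W : EuclideanSpace ℝ (Fin d) → ℝ≥0∞} {c : ℝ≥0∞} (hc : c ≠ 0)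
    (hW : ∀ᵐ z' ∂(volume : Measure (EuclideanSpace ℝ (Fin d))),
      c * ENNReal.ofReal (1 + ‖z'‖) ^ (-A) ≤ W z') :
    ∃ c' : ℝ≥0∞, c' ≠ 0 ∧ ∀ y' : EuclideanSpace ℝ (Fin d),
      c' * ENNReal.ofReal (1 + ‖y'‖) ^ (-(A + K - d)) ≤
        ∫⁻ z', W z' * ENNReal.ofReal ‖y' - z'‖ ^ (-K) := by
  haveI := euclid_nontrivial d hd
  have hv₁0 : volume (ball (0 : EuclideanSpace ℝ (Fin d)) 1) ≠ 0 :=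
    (measure_ball_pos _ _ one_pos).ne'
  refine ⟨c * ENNReal.ofReal (3 ^ (-(A + K)) * 2 ^ d)
      * volume (ball (0 : EuclideanSpace ℝ (Fin d)) 1), ?_, fun y' => ?_⟩
  · exact (ENNReal.mul_pos (ENNReal.mul_pos hc (ENNReal.ofReal_pos.mpr (by positivity)).ne').ne'
      hv₁0).ne'
  · have hρ1 : 1 ≤ 1 + ‖y'‖ := by simp [norm_nonneg]
    have hρ0 : (0:ℝ) < 1 + ‖y'‖ := by linarith
    have core := conv_core d hd hA hK hW y' (r := 2 * (1 + ‖y'‖)) (Rw := 3 * (1 + ‖y'‖))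
      (Rk := 3 * (1 + ‖y'‖)) (by linarith) (by linarith) (by linarith)
      (fun z' hz => by linarith)
      (fun z' hz => by have h1 := norm_sub_le y' z'; linarith)
    refine le_trans (le_of_eq ?_) core
    have hreal : (3 * (1 + ‖y'‖)) ^ (-A) * (3 * (1 + ‖y'‖)) ^ (-K) * (2 * (1 + ‖y'‖)) ^ d
        = 3 ^ (-(A + K)) * 2 ^ d * (1 + ‖y'‖) ^ (-(A + K - (d : ℝ))) := by
      have h3 : (0:ℝ) < 3 := by norm_num
      have h2 : (0:ℝ) < 2 := by norm_num
      rw [show ((2 * (1 + ‖y'‖)) ^ d : ℝ) = (2 * (1 + ‖y'‖)) ^ (d : ℝ) from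
        (Real.rpow_natCast _ d).symm]
      rw [Real.mul_rpow h3.le hρ0.le, Real.mul_rpow h3.le hρ0.le, Real.mul_rpow h2.le hρ0.le]
      rw [show -(A + K - (d : ℝ)) = -A + (-K + (d:ℝ)) by ring, Real.rpow_add hρ0,
        Real.rpow_add hρ0, show -(A + K) = -A + -K by ring, Real.rpow_add h3,
        show ((2:ℝ) ^ (d:ℝ)) = 2 ^ d from Real.rpow_natCast 2 d]
      ring
    have key : ENNReal.ofReal ((3 * (1 + ‖y'‖)) ^ (-A)) * ENNReal.ofReal ((3 * (1 + ‖y'‖)) ^ (-K))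
        * ENNReal.ofReal ((2 * (1 + ‖y'‖)) ^ d)
        = ENNReal.ofReal (3 ^ (-(A + K)) * 2 ^ d)
          * ENNReal.ofReal ((1 + ‖y'‖) ^ (-(A + K - (d:ℝ)))) := by
      rw [← ENNReal.ofReal_mul (by positivity), ← ENNReal.ofReal_mul (by positivity), hreal,
        ENNReal.ofReal_mul (by positivity)]
    calc c * ENNReal.ofReal (3 ^ (-(A + K)) * 2 ^ d)
          * volume (ball (0 : EuclideanSpace ℝ (Fin d)) 1)
          * ENNReal.ofReal (1 + ‖y'‖) ^ (-(A + K - (d:ℝ)))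
        = c * (ENNReal.ofReal (3 ^ (-(A + K)) * 2 ^ d)
            * ENNReal.ofReal ((1 + ‖y'‖) ^ (-(A + K - (d:ℝ)))))
            * volume (ball (0 : EuclideanSpace ℝ (Fin d)) 1) := by
          rw [ENNReal.ofReal_rpow_of_pos hρ0]; ring
      _ = c * (ENNReal.ofReal ((3 * (1 + ‖y'‖)) ^ (-A)) * ENNReal.ofReal ((3 * (1 + ‖y'‖)) ^ (-K))
            * ENNReal.ofReal ((2 * (1 + ‖y'‖)) ^ d))
            * volume (ball (0 : EuclideanSpace ℝ (Fin d)) 1) := by rw [key]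
      _ = c * ENNReal.ofReal (3 * (1 + ‖y'‖)) ^ (-A) * ENNReal.ofReal (3 * (1 + ‖y'‖)) ^ (-K) *
            (ENNReal.ofReal ((2 * (1 + ‖y'‖)) ^ d)
              * volume (ball (0 : EuclideanSpace ℝ (Fin d)) 1)) := by
          rw [← ENNReal.ofReal_rpow_of_pos (show (0:ℝ) < 3 * (1 + ‖y'‖) by linarith),
            ← ENNReal.ofReal_rpow_of_pos (show (0:ℝ) < 3 * (1 + ‖y'‖) by linarith)]
          ring

lemma conv_lb2 (d : ℕ) (hd : 1 ≤ d) {A K : ℝ} (hA : 0 ≤ A) (hK : 0 ≤ K)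
    {W : EuclideanSpace ℝ (Fin d) → ℝ≥0∞} {c : ℝ≥0∞} (hc : c ≠ 0)
    (hW : ∀ᵐ z' ∂(volume : Measure (EuclideanSpace ℝ (Fin d))),
      c * ENNReal.ofReal (1 + ‖z'‖) ^ (-A) ≤ W z') :
    ∃ c' : ℝ≥0∞, c' ≠ 0 ∧ ∀ y' : EuclideanSpace ℝ (Fin d),
      c' * ENNReal.ofReal (1 + ‖y'‖) ^ (-K) ≤
        ∫⁻ z', W z' * ENNReal.ofReal ‖y' - z'‖ ^ (-K) := by
  haveI := euclid_nontrivial d hd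
  have hv₁0 : volume (ball (0 : EuclideanSpace ℝ (Fin d)) 1) ≠ 0 :=
    (measure_ball_pos _ _ one_pos).ne'
  refine ⟨c * ENNReal.ofReal (2 ^ (-A))
      * volume (ball (0 : EuclideanSpace ℝ (Fin d)) 1), ?_, fun y' => ?_⟩
  · exact (ENNReal.mul_pos (ENNReal.mul_pos hc (ENNReal.ofReal_pos.mpr (by positivity)).ne').ne'
      hv₁0).ne'
  · have hρ1 : 1 ≤ 1 + ‖y'‖ := by simp [norm_nonneg]
    have hρ0 : (0:ℝ) < 1 + ‖y'‖ := by linarith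
    have core := conv_core d hd hA hK hW y' (r := 1) (Rw := 2) (Rk := 1 + ‖y'‖)
      one_pos (by norm_num) hρ0
      (fun z' hz => by linarith)
      (fun z' hz => by have h1 := norm_sub_le y' z'; linarith)
    refine le_trans (le_of_eq ?_) core
    rw [one_pow, ENNReal.ofReal_one, one_mul,
      ENNReal.ofReal_rpow_of_pos (by norm_num : (0:ℝ) < 2)]
    ring

lemma div_top (N : ℕ) (hN : 3 ≤ N) {W : EuclideanSpace ℝ (Fin (N-1)) → ℝ≥0∞} {c : ℝ≥0∞}
    (hc : c ≠ 0)
    (hW : ∀ᵐ y' ∂(volume : Measure (EuclideanSpace ℝ (Fin (N-1)))),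
      c * ENNReal.ofReal (1 + ‖y'‖) ^ (-(1:ℝ)) ≤ W y')
    (x : EuclideanSpace ℝ (Fin N)) :
    ∫⁻ y', ENNReal.ofReal ‖x - up N y' 0‖ ^ ((2:ℝ) - N) * W y' = ⊤ := by
  haveI := euclid_nontrivial (N-1) (by omega)
  set R : ℝ := 1 + ‖x‖ with hRdef
  have hR1 : 1 ≤ R := by simp [hRdef, norm_nonneg]
  have hR0 : 0 < R := by linarith
  set A : ℕ → Set (EuclideanSpace ℝ (Fin (N-1))) := fun j => ball (0:EuclideanSpace ℝ (Fin (N-1))) (2^(j+1) * R) \ ball (0:EuclideanSpace ℝ (Fin (N-1))) (2^j * R) with hA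
  have hmeas : ∀ j, MeasurableSet (A j) := fun j => measurableSet_ball.diff measurableSet_ball
  have hpow : ∀ j : ℕ, (1:ℝ) ≤ 2 ^ j := by
    intro j
    induction j with
    | zero => norm_num
    | succ n ih => rw [pow_succ]; nlinarith
  have hdisj : Pairwise (Function.onFun Disjoint A) := by
    have key : ∀ i j, i < j → Disjoint (A i) (A j) := by
      intro i j hij
      rw [Set.disjoint_left]
      rintro y ⟨hy1, -⟩ ⟨-, hy2⟩
      apply hy2
      rw [mem_ball, dist_zero_right] at hy1 ⊢
      have h2 : (2:ℝ)^(i+1) ≤ 2^j := by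
        apply pow_le_pow_right₀ (by norm_num) (by omega)
      nlinarith
    intro i j hij
    rcases hij.lt_or_gt with h | h
    · exact key _ _ h
    · exact (key _ _ h).symm
  set v₁ := volume (ball (0:EuclideanSpace ℝ (Fin (N-1))) 1) with hv₁
  have hv₁0 : v₁ ≠ 0 := (measure_ball_pos _ _ one_pos).ne'
  have hv₁top : v₁ ≠ ⊤ := measure_ball_lt_top.ne
  set ε := c * ENNReal.ofReal (4 ^ ((1:ℝ) - N)) * v₁ with hε
  have hε0 : ε ≠ 0 :=
    (ENNReal.mul_pos (ENNReal.mul_pos hc (ENNReal.ofReal_pos.mpr (by positivity)).ne').ne'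
      hv₁0).ne'
  have hAvol : ∀ j, ENNReal.ofReal ((2^j * R) ^ (N-1)) * v₁ ≤ volume (A j) := by
    intro j
    have hsub : ball (0:EuclideanSpace ℝ (Fin (N-1))) (2^j * R) ⊆ ball (0:EuclideanSpace ℝ (Fin (N-1))) (2^(j+1) * R) := by
      apply ball_subset_ball
      have : (2:ℝ)^j ≤ 2^(j+1) := by apply pow_le_pow_right₀ (by norm_num) (by omega)
      nlinarith
    rw [hA]
    simp only []
    rw [measure_diff hsub measurableSet_ball.nullMeasurableSet measure_ball_lt_top.ne]
    rw [Measure.addHaar_ball _ _ (by positivity : (0:ℝ) ≤ 2^(j+1) * R),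
      Measure.addHaar_ball _ _ (by positivity : (0:ℝ) ≤ 2^j * R), finrank_euclideanSpace_fin]
    rw [← ENNReal.sub_mul (fun _ _ => hv₁top)]
    apply mul_le_mul_left
    apply ENNReal.le_sub_of_add_le_left ENNReal.ofReal_ne_top
    rw [← ENNReal.ofReal_add (by positivity) (by positivity)]
    apply ENNReal.ofReal_le_ofReal
    have h2d : (2:ℝ) ≤ 2 ^ (N-1) := by
      calc (2:ℝ) = 2^1 := (pow_one 2).symm
      _ ≤ 2 ^ (N-1) := by apply pow_le_pow_right₀ (by norm_num) (by omega)
    have hbase : (0:ℝ) < 2^j * R := by positivity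
    calc (2^j * R) ^ (N-1) + (2^j * R) ^ (N-1) = 2 * (2^j * R) ^ (N-1) := by ring
    _ ≤ 2 ^ (N-1) * (2^j * R) ^ (N-1) := by
        apply mul_le_mul_of_nonneg_right h2d (by positivity)
    _ = (2^(j+1) * R) ^ (N-1) := by
        rw [← mul_pow]
        congr 1
        rw [pow_succ]
        ring
  have hcontrib : ∀ j, ε ≤ ∫⁻ y' in A j,
      ENNReal.ofReal ‖x - up N y' 0‖ ^ ((2:ℝ) - N) * W y' := by
    intro j
    have hb0 : (0:ℝ) < 2^(j+2) * R := by positivity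
    have hlow : ∀ᵐ y' ∂(volume.restrict (A j)),
        c * ENNReal.ofReal (2^(j+2) * R) ^ ((1:ℝ) - N) ≤
          ENNReal.ofReal ‖x - up N y' 0‖ ^ ((2:ℝ) - N) * W y' := by
      filter_upwards [ae_restrict_of_ae hW, ae_restrict_mem (hmeas j)] with y' h1 h2
      obtain ⟨h2a, h2b⟩ := h2
      rw [mem_ball, dist_zero_right] at h2a
      have hupn : ‖up N y' 0‖ = ‖y'‖ := norm_up_zero N (by omega) y'
      have hb1 : ‖x - up N y' 0‖ ≤ 2^(j+2) * R := by
        have := norm_sub_le x (up N y' 0)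
        rw [hupn] at this
        have h4 : (2:ℝ)^(j+2) = 2 * 2^(j+1) := by rw [pow_succ]; ring
        have h5 : (1:ℝ) ≤ 2^(j+1) := hpow (j+1)
        nlinarith [norm_nonneg x]
      have hker : ENNReal.ofReal (2^(j+2) * R) ^ ((2:ℝ) - N) ≤
          ENNReal.ofReal ‖x - up N y' 0‖ ^ ((2:ℝ) - N) := by
        apply ker_lb hb0 (norm_nonneg _) hb1
        have : (3:ℝ) ≤ N := by exact_mod_cast hN
        linarith
      have hwt : ENNReal.ofReal (2^(j+2) * R) ^ (-(1:ℝ)) ≤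
          ENNReal.ofReal (1 + ‖y'‖) ^ (-(1:ℝ)) := by
        apply ker_anti (by positivity)
        · have h4 : (2:ℝ)^(j+2) = 2 * 2^(j+1) := by rw [pow_succ]; ring
          have h5 : (1:ℝ) ≤ 2^(j+1) := hpow (j+1)
          nlinarith
        · norm_num
      have hsplit : c * ENNReal.ofReal (2^(j+2) * R) ^ ((1:ℝ) - N)
          = ENNReal.ofReal (2^(j+2) * R) ^ ((2:ℝ) - N)
            * (c * ENNReal.ofReal (2^(j+2) * R) ^ (-(1:ℝ))) := by
        rw [← mul_assoc, mul_comm _ c, mul_assoc, ← ENNReal.rpow_add _ _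
          (by simp [ENNReal.ofReal_pos, hb0, hR0]) ENNReal.ofReal_ne_top,
          show (2:ℝ) - N + -1 = 1 - N by ring]
      rw [hsplit]
      calc ENNReal.ofReal (2^(j+2) * R) ^ ((2:ℝ) - N) * (c * ENNReal.ofReal (2^(j+2) * R) ^ (-(1:ℝ)))
          ≤ ENNReal.ofReal ‖x - up N y' 0‖ ^ ((2:ℝ) - N) * (c * ENNReal.ofReal (1 + ‖y'‖) ^ (-(1:ℝ))) :=
            mul_le_mul' hker (mul_le_mul_right hwt c)
        _ ≤ ENNReal.ofReal ‖x - up N y' 0‖ ^ ((2:ℝ) - N) * W y' := mul_le_mul_right h1 _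
    have hεj : ε = c * ENNReal.ofReal (2^(j+2) * R) ^ ((1:ℝ) - N)
        * (ENNReal.ofReal ((2^j * R) ^ (N-1)) * v₁) := by
      have hcast : ((N - 1 : ℕ) : ℝ) = (N:ℝ) - 1 := by
        have : (1:ℕ) ≤ N := by omega
        push_cast [Nat.cast_sub this]
        ring
      have hrealeq : (2^(j+2) * R) ^ ((1:ℝ) - N) * ((2^j * R) ^ (N-1)) = 4 ^ ((1:ℝ) - N) := by
        have hb : (0:ℝ) < 2^j * R := by positivity
        have h4 : (2:ℝ)^(j+2) * R = 4 * (2^j * R) := by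
          rw [show j+2 = j+1+1 from rfl, pow_succ, pow_succ]; ring
        rw [show ((2^j * R) ^ (N-1) : ℝ) = (2^j * R) ^ (((N-1:ℕ)):ℝ) from
          (Real.rpow_natCast _ _).symm, hcast, h4,
          Real.mul_rpow (by norm_num) hb.le, mul_assoc, ← Real.rpow_add hb]
        norm_num
      rw [hε]
      rw [ENNReal.ofReal_rpow_of_pos hb0, mul_assoc, mul_assoc, ← mul_assoc (ENNReal.ofReal _),
        ← ENNReal.ofReal_mul (by positivity), hrealeq]
    rw [hεj]
    calc c * ENNReal.ofReal (2^(j+2) * R) ^ ((1:ℝ) - N) * (ENNReal.ofReal ((2^j * R) ^ (N-1)) * v₁)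
        ≤ c * ENNReal.ofReal (2^(j+2) * R) ^ ((1:ℝ) - N) * volume (A j) :=
          mul_le_mul_right (hAvol j) _
      _ = ∫⁻ _ in A j, c * ENNReal.ofReal (2^(j+2) * R) ^ ((1:ℝ) - N) ∂volume :=
          (setLIntegral_const _ _).symm
      _ ≤ ∫⁻ y' in A j, ENNReal.ofReal ‖x - up N y' 0‖ ^ ((2:ℝ) - N) * W y' ∂volume :=
          lintegral_mono_ae hlow
  have htop : (⊤:ℝ≥0∞) ≤ ∫⁻ y', ENNReal.ofReal ‖x - up N y' 0‖ ^ ((2:ℝ) - N) * W y' := by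
    calc (⊤:ℝ≥0∞) = ∑' _ : ℕ, ε := (ENNReal.tsum_const_eq_top_of_ne_zero hε0).symm
      _ ≤ ∑' j, ∫⁻ y' in A j, ENNReal.ofReal ‖x - up N y' 0‖ ^ ((2:ℝ) - N) * W y' :=
          ENNReal.tsum_le_tsum hcontrib
      _ = ∫⁻ y' in ⋃ j, A j, ENNReal.ofReal ‖x - up N y' 0‖ ^ ((2:ℝ) - N) * W y' :=
          (lintegral_iUnion hmeas hdisj _).symm
      _ ≤ ∫⁻ y', ENNReal.ofReal ‖x - up N y' 0‖ ^ ((2:ℝ) - N) * W y' :=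
          setLIntegral_le_lintegral _ _
  exact top_le_iff.mp htop

lemma ker_ne_zero {r e : ℝ} (he : e ≤ 0) : ENNReal.ofReal r ^ e ≠ 0 := by
  rcases le_or_gt r 0 with h0 | hpos
  · rw [ENNReal.ofReal_eq_zero.mpr h0]
    rcases he.lt_or_eq with hneg | he0
    · rw [ENNReal.zero_rpow_of_neg hneg]; exact ENNReal.top_ne_zero
    · rw [he0, ENNReal.rpow_zero]; exact one_ne_zero
  · exact (ENNReal.rpow_pos (ENNReal.ofReal_pos.mpr hpos) ENNReal.ofReal_ne_top).ne'

lemma trace_lb (N : ℕ) (hN : 3 ≤ N) (u : EuclideanSpace ℝ (Fin N) → ℝ)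
    {β : Type*} [MeasurableSpace β] (ν : Measure β) (ψ : β → EuclideanSpace ℝ (Fin N))
    (W : β → ℝ≥0∞)
    (hker : ∀ x : EuclideanSpace ℝ (Fin N),
      Measurable fun b => ENNReal.ofReal ‖x - ψ b‖ ^ ((2:ℝ) - N) * W b)
    (hpos : ∀ x0 : EuclideanSpace ℝ (Fin N), ht N x0 = 0 → ∀ᵐ b ∂ν, ψ b ≠ x0)
    (htr : ∀ᵐ x' ∂(volume : Measure (EuclideanSpace ℝ (Fin (N-1)))),
      Tendsto u (nhdsWithin (up N x' 0) (upperHalf N)) (nhds (u (up N x' 0))))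
    (h : ∀ᵐ x ∂(volume.restrict (upperHalf N)),
      (∫⁻ b, ENNReal.ofReal ‖x - ψ b‖ ^ ((2:ℝ) - N) * W b ∂ν) ≤ ENNReal.ofReal (u x)) :
    ∀ᵐ x' ∂(volume : Measure (EuclideanSpace ℝ (Fin (N-1)))),
      (∫⁻ b, ENNReal.ofReal ‖up N x' 0 - ψ b‖ ^ ((2:ℝ) - N) * W b ∂ν) ≤
        ENNReal.ofReal (u (up N x' 0)) := by
  have heN : (2:ℝ) - N ≤ 0 := by
    have : (3:ℝ) ≤ N := by exact_mod_cast hN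
    linarith
  have hUH : MeasurableSet (upperHalf N) := (upperHalf_isOpen N).measurableSet
  have hnull : volume ({x | ¬ ((∫⁻ b, ENNReal.ofReal ‖x - ψ b‖ ^ ((2:ℝ) - N) * W b ∂ν) ≤
      ENNReal.ofReal (u x))} ∩ upperHalf N) = 0 := by
    have h2 := ae_iff.mp h
    rwa [Measure.restrict_apply' hUH] at h2
  filter_upwards [htr] with x' hx'
  have hx0ht : ht N (up N x' 0) = 0 := ht_up N (by omega) x' 0
  have hz : ∀ j : ℕ, ∃ z, z ∈ upperHalf N ∧
      ((∫⁻ b, ENNReal.ofReal ‖z - ψ b‖ ^ ((2:ℝ) - N) * W b ∂ν) ≤ ENNReal.ofReal (u z)) ∧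
      dist z (up N x' 0) < 1/(j+1) := by
    intro j
    have hjpos : (0:ℝ) < 1/(j+1) := by positivity
    have hsopen : IsOpen (ball (up N x' 0) (1/(j+1)) ∩ upperHalf N) :=
      isOpen_ball.inter (upperHalf_isOpen N)
    have hsne : (ball (up N x' 0) (1/(j+1)) ∩ upperHalf N).Nonempty := by
      refine ⟨up N x' (1/(2*(j+1))), ?_, ?_⟩
      · rw [mem_ball, dist_eq_norm, norm_up_same N (by omega), sub_zero,
          abs_of_pos (by positivity), div_lt_div_iff₀ (by positivity) (by positivity)]
        nlinarith [Nat.cast_nonneg (α := ℝ) j]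
      · show 0 < ht N (up N x' (1/(2*(j+1))))
        rw [ht_up N (by omega)]
        positivity
    have hvol : 0 < volume (ball (up N x' 0) (1/(j+1)) ∩ upperHalf N) :=
      hsopen.measure_pos volume hsne
    by_contra hcon
    push_neg at hcon
    have hsub : ball (up N x' 0) (1/(j+1)) ∩ upperHalf N ⊆
        {x | ¬ ((∫⁻ b, ENNReal.ofReal ‖x - ψ b‖ ^ ((2:ℝ) - N) * W b ∂ν) ≤
          ENNReal.ofReal (u x))} ∩ upperHalf N := by
      rintro y ⟨hy1, hy2⟩
      refine ⟨fun hQ => ?_, hy2⟩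
      have hge := hcon y hy2 hQ
      rw [mem_ball] at hy1
      linarith
    have := measure_mono_null hsub hnull
    exact hvol.ne' this
  choose z hzUH hzQ hzdist using hz
  have hztend : Tendsto z atTop (nhdsWithin (up N x' 0) (upperHalf N)) := by
    rw [tendsto_nhdsWithin_iff]
    constructor
    · rw [tendsto_iff_dist_tendsto_zero]
      refine squeeze_zero (fun j => dist_nonneg) (fun j => (hzdist j).le) ?_
      exact tendsto_one_div_add_atTop_nhds_zero_nat
    · exact Filter.Eventually.of_forall hzUH
  have hulim : Tendsto (fun j => ENNReal.ofReal (u (z j))) atTop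
      (nhds (ENNReal.ofReal (u (up N x' 0)))) :=
    (ENNReal.continuous_ofReal.tendsto _).comp (hx'.comp hztend)
  have h1 : (∫⁻ b, ENNReal.ofReal ‖up N x' 0 - ψ b‖ ^ ((2:ℝ) - N) * W b ∂ν) ≤
      ∫⁻ b, liminf (fun j => ENNReal.ofReal ‖z j - ψ b‖ ^ ((2:ℝ) - N) * W b) atTop ∂ν := by
    apply lintegral_mono_ae
    filter_upwards [hpos (up N x' 0) hx0ht] with b hb
    have hκ : Tendsto (fun j => ENNReal.ofReal ‖z j - ψ b‖ ^ ((2:ℝ) - N)) atTop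
        (nhds (ENNReal.ofReal ‖up N x' 0 - ψ b‖ ^ ((2:ℝ) - N))) := by
      have hc : Continuous fun x : EuclideanSpace ℝ (Fin N) =>
          ENNReal.ofReal ‖x - ψ b‖ ^ ((2:ℝ) - N) :=
        ENNReal.continuous_rpow_const.comp
          (ENNReal.continuous_ofReal.comp ((continuous_id.sub continuous_const).norm))
      exact (hc.tendsto _).comp (hztend.mono_right nhdsWithin_le_nhds)
    rcases eq_or_ne (W b) ⊤ with hWb | hWb
    · have hconst : ∀ j, ENNReal.ofReal ‖z j - ψ b‖ ^ ((2:ℝ) - N) * W b = ⊤ := by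
        intro j
        rw [hWb, ENNReal.mul_top (ker_ne_zero heN)]
      simp only [hconst]
      rw [liminf_const]
      exact le_top
    · have hmul : Tendsto (fun j => ENNReal.ofReal ‖z j - ψ b‖ ^ ((2:ℝ) - N) * W b) atTop
          (nhds (ENNReal.ofReal ‖up N x' 0 - ψ b‖ ^ ((2:ℝ) - N) * W b)) :=
        ENNReal.Tendsto.mul_const hκ (Or.inr hWb)
      rw [hmul.liminf_eq]
  have h2 : (∫⁻ b, liminf (fun j => ENNReal.ofReal ‖z j - ψ b‖ ^ ((2:ℝ) - N) * W b) atTop ∂ν) ≤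
      liminf (fun j => ∫⁻ b, ENNReal.ofReal ‖z j - ψ b‖ ^ ((2:ℝ) - N) * W b ∂ν) atTop :=
    lintegral_liminf_le (fun j => hker (z j))
  have h3 : liminf (fun j => ∫⁻ b, ENNReal.ofReal ‖z j - ψ b‖ ^ ((2:ℝ) - N) * W b ∂ν) atTop ≤
      liminf (fun j => ENNReal.ofReal (u (z j))) atTop :=
    Filter.liminf_le_liminf (Filter.Eventually.of_forall fun j => hzQ j)
  have h4 : liminf (fun j => ENNReal.ofReal (u (z j))) atTop
      = ENNReal.ofReal (u (up N x' 0)) := hulim.liminf_eq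
  exact le_trans h1 (le_trans h2 (h3.trans_eq h4))

def LBnd (N : ℕ) (u : EuclideanSpace ℝ (Fin N) → ℝ) (a : ℝ) : Prop :=
  ∃ c : ℝ≥0∞, c ≠ 0 ∧ ∀ᵐ x' ∂(volume : Measure (EuclideanSpace ℝ (Fin (N-1)))),
    c * ENNReal.ofReal (1 + ‖x'‖) ^ (-a) ≤ ENNReal.ofReal (u (up N x' 0))

lemma up_inj (N : ℕ) (hN : 1 ≤ N) {y' w' : EuclideanSpace ℝ (Fin (N-1))} (t : ℝ)
    (h : up N y' t = up N w' t) : y' = w' := by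
  apply PiLp.ext
  intro i
  have hi : (i : ℕ) < N - 1 := i.isLt
  have := congrArg (fun v : EuclideanSpace ℝ (Fin N) => v ⟨i, by omega⟩) h
  simp only [up_apply] at this
  rw [dif_pos hi, dif_pos hi] at this
  simpa using this

lemma lb_pow {N : ℕ} {u : EuclideanSpace ℝ (Fin N) → ℝ} {a p : ℝ} (hp : 0 < p)
    {c : ℝ≥0∞} (hc : c ≠ 0)
    (hae : ∀ᵐ x' ∂(volume : Measure (EuclideanSpace ℝ (Fin (N-1)))),
      c * ENNReal.ofReal (1 + ‖x'‖) ^ (-a) ≤ ENNReal.ofReal (u (up N x' 0))) :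
    ∀ᵐ z' ∂(volume : Measure (EuclideanSpace ℝ (Fin (N-1)))),
      (c ^ p) * ENNReal.ofReal (1 + ‖z'‖) ^ (-(p * a)) ≤
        ENNReal.ofReal (u (up N z' 0)) ^ p := by
  filter_upwards [hae] with z' hz
  have := ENNReal.rpow_le_rpow hz hp.le
  rw [ENNReal.mul_rpow_of_nonneg _ _ hp.le, ← ENNReal.rpow_mul] at this
  rwa [show -a * p = -(p * a) by ring] at this

lemma Hu_lb (N : ℕ) (hN : 3 ≤ N) (p k : ℝ) (u : EuclideanSpace ℝ (Fin N) → ℝ)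
    (hp : 0 < p) (hk0 : 0 ≤ k) {a : ℝ} (ha : 0 ≤ a) (h : LBnd N u a) :
    ∃ c' : ℝ≥0∞, c' ≠ 0 ∧ ∀ y' : EuclideanSpace ℝ (Fin (N-1)),
      c' * ENNReal.ofReal (1 + ‖y'‖) ^ (-(p * a + k - ((N:ℝ) - 1))) ≤ Hu N p k u y' := by
  obtain ⟨c, hc, hae⟩ := h
  have hcp : c ^ p ≠ 0 := by
    simp [ENNReal.rpow_eq_zero_iff, hc, hp, hp.not_gt, hp.le]
  obtain ⟨c', hc', hbd⟩ := conv_lb (N-1) (by omega) (by positivity) hk0 hcp (lb_pow hp hc hae)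
  refine ⟨c', hc', fun y' => ?_⟩
  have hcast : (((N:ℕ) - 1 : ℕ) : ℝ) = (N:ℝ) - 1 := by
    have h1 : (1:ℕ) ≤ N := by omega
    push_cast [Nat.cast_sub h1]
    ring
  have := hbd y'
  rwa [hcast] at this

lemma Hu_lb2 (N : ℕ) (hN : 3 ≤ N) (p k : ℝ) (u : EuclideanSpace ℝ (Fin N) → ℝ)
    (hp : 0 < p) (hk0 : 0 ≤ k) {a : ℝ} (ha : 0 ≤ a) (h : LBnd N u a) :
    ∃ c' : ℝ≥0∞, c' ≠ 0 ∧ ∀ y' : EuclideanSpace ℝ (Fin (N-1)),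
      c' * ENNReal.ofReal (1 + ‖y'‖) ^ (-k) ≤ Hu N p k u y' := by
  obtain ⟨c, hc, hae⟩ := h
  have hcp : c ^ p ≠ 0 := by
    simp [ENNReal.rpow_eq_zero_iff, hc, hp, hp.not_gt, hp.le]
  exact conv_lb2 (N-1) (by omega) (by positivity) hk0 hcp (lb_pow hp hc hae)

lemma exists_iter_neg {p k ν : ℝ} (hp0 : 0 < p) (hk1 : 1 < k) (hkN : k < ν - 1)
    (hsub : p * (k - 1) < ν - 1) (g : ℕ → ℝ) (hg0 : g 0 = k - 1)
    (hgrec : ∀ n, g (n + 1) = p * g n - (ν - k)) (hpos : ∀ n, 0 ≤ g n) : False := by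
  have hνk : 0 < ν - k := by linarith
  rcases le_or_gt p 1 with hple | hpgt
  · have hdec : ∀ n : ℕ, g n ≤ g 0 - n * (ν - k) := by
      intro n
      induction n with
      | zero => simp
      | succ m ih =>
        have h1 : p * g m ≤ g m := by nlinarith [hpos m]
        rw [hgrec m]
        push_cast
        nlinarith
    obtain ⟨n, hn⟩ := exists_nat_gt (g 0 / (ν - k))
    have h2 : g 0 < n * (ν - k) := by
      rw [div_lt_iff₀ hνk] at hn
      linarith
    have := hdec n
    have := hpos n
    linarith
  · set astar := (ν - k) / (p - 1) with hastar
    have hp1 : 0 < p - 1 := by linarith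
    have hstar : astar * (p - 1) = ν - k := div_mul_cancel₀ _ hp1.ne'
    have hδ : g 0 < astar := by
      rw [hg0, hastar, lt_div_iff₀ hp1]
      nlinarith
    have hgeo : ∀ n : ℕ, astar - g n = p ^ n * (astar - g 0) := by
      intro n
      induction n with
      | zero => simp
      | succ m ih =>
        rw [hgrec m, pow_succ]
        nlinarith
    obtain ⟨n, hn⟩ := pow_unbounded_of_one_lt (astar / (astar - g 0)) hpgt
    rw [div_lt_iff₀ (by linarith)] at hn
    have := hgeo n
    have := hpos n
    nlinarith


/-- Theorem 1.1(i2): if `1 < k < N-1` and `0 < p < (N-1)/(k-1)` then, for every `λ > 0`,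
problem (1.1) with a nonzero admissible measure `μ` has no positive solution. -/
theorem no_solution_mu_ne_zero_subcritical
    (N : ℕ) (hN : 3 ≤ N)
    (μ : Measure (EuclideanSpace ℝ (Fin N))) (hμ : AdmissibleMeasure N μ)
    (k p lam : ℝ) (hk1 : 1 < k) (hkN : k < (N : ℝ) - 1)
    (hp0 : 0 < p) (hp : p < ((N : ℝ) - 1) / (k - 1)) (hlam : 0 < lam) :
    ¬ ∃ u : EuclideanSpace ℝ (Fin N) → ℝ, IsPosSolution N p lam k μ u := by
  rintro ⟨u, humeas, hupos, htrace, hHufin, hfin2, heq⟩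
  obtain ⟨hμ0, hμloc, ⟨F, hFclosed, hFsub, hFnull⟩, hμpot⟩ := hμ
  haveI := hμloc
  haveI := euclid_nontrivial (N-1) (by omega)
  have hN3 : (3:ℝ) ≤ (N:ℝ) := by exact_mod_cast hN
  have heN : (2:ℝ) - N ≤ 0 := by linarith
  have hσ : 0 < sphereArea N := by
    apply mul_pos (by linarith : (0:ℝ) < N)
    exact ENNReal.toReal_pos
      (measure_ball_pos volume (0 : EuclideanSpace ℝ (Fin N)) one_pos).ne'
      measure_ball_lt_top.ne
  have hc₀ : (0:ℝ) < (((N:ℝ) - 2) * sphereArea N)⁻¹ :=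
    inv_pos.mpr (mul_pos (by linarith) hσ)
  have hc₀E0 : ENNReal.ofReal (((N:ℝ) - 2) * sphereArea N)⁻¹ ≠ 0 :=
    (ENNReal.ofReal_pos.mpr hc₀).ne'
  have hclamE0 : ENNReal.ofReal (2 * lam / (((N:ℝ) - 2) * sphereArea N)) ≠ 0 :=
    (ENNReal.ofReal_pos.mpr (div_pos (by linarith) (mul_pos (by linarith) hσ))).ne'
  have heq1 : ∀ᵐ x ∂(volume.restrict (upperHalf N)),
      (∫⁻ y, ENNReal.ofReal ‖x - y‖ ^ ((2:ℝ) - N)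
        * ENNReal.ofReal (((N:ℝ) - 2) * sphereArea N)⁻¹ ∂μ) ≤ ENNReal.ofReal (u x) := by
    filter_upwards [heq] with x hx
    calc (∫⁻ y, ENNReal.ofReal ‖x - y‖ ^ ((2:ℝ) - N)
            * ENNReal.ofReal (((N:ℝ) - 2) * sphereArea N)⁻¹ ∂μ)
        = ENNReal.ofReal (((N:ℝ) - 2) * sphereArea N)⁻¹
            * ∫⁻ y, ENNReal.ofReal ‖x - y‖ ^ ((2:ℝ) - N) ∂μ := by
          rw [lintegral_mul_const' _ _ ENNReal.ofReal_ne_top, mul_comm]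
      _ ≤ ENNReal.ofReal (((N:ℝ) - 2) * sphereArea N)⁻¹
            * ∫⁻ y, (ENNReal.ofReal ‖x - y‖ ^ ((2:ℝ) - N)
              + ENNReal.ofReal ‖reflN N x - y‖ ^ ((2:ℝ) - N)) ∂μ :=
          mul_le_mul_right (lintegral_mono fun y => le_self_add) _
      _ ≤ _ := le_self_add
      _ = ENNReal.ofReal (u x) := hx.symm
  have heq2 : ∀ᵐ x ∂(volume.restrict (upperHalf N)),
      ENNReal.ofReal (2 * lam / (((N:ℝ) - 2) * sphereArea N)) *
        (∫⁻ y', ENNReal.ofReal ‖x - up N y' 0‖ ^ ((2:ℝ) - N) * Hu N p k u y') ≤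
        ENNReal.ofReal (u x) := by
    filter_upwards [heq] with x hx
    rw [hx]
    exact le_add_self
  have hUHpos : 0 < volume (upperHalf N) := by
    apply (upperHalf_isOpen N).measure_pos volume
    exact ⟨up N 0 1, by show 0 < ht N (up N 0 1); rw [ht_up N (by omega)]; norm_num⟩
  have kermeas : ∀ (x : EuclideanSpace ℝ (Fin N)) (W : EuclideanSpace ℝ (Fin (N-1)) → ℝ≥0∞),
      Measurable W →
      Measurable fun y' => ENNReal.ofReal ‖x - up N y' 0‖ ^ ((2:ℝ) - N) * W y' := by
    intro x W hW
    exact (ENNReal.continuous_rpow_const.measurable.comp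
      (ENNReal.measurable_ofReal.comp
        ((measurable_const.sub (up_measurable N)).norm))).mul hW
  have hWBmeas : ∀ B : ℝ, Measurable fun y' : EuclideanSpace ℝ (Fin (N-1)) =>
      ENNReal.ofReal (1 + ‖y'‖) ^ (-B) := fun B =>
    ENNReal.continuous_rpow_const.measurable.comp
      (ENNReal.measurable_ofReal.comp (continuous_const.add continuous_norm).measurable)
  have hpos_up : ∀ x0 : EuclideanSpace ℝ (Fin N), ht N x0 = 0 →
      ∀ᵐ y' ∂(volume : Measure (EuclideanSpace ℝ (Fin (N-1)))), up N y' 0 ≠ x0 := by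
    intro x0 hx0
    rw [ae_iff]
    rcases Classical.em (∃ w', up N w' 0 = x0) with ⟨w', hw'⟩ | hne
    · refine measure_mono_null (fun y' hy' => ?_) (measure_singleton w')
      simp only [Set.mem_setOf_eq, not_not] at hy'
      have heq' : up N y' 0 = up N w' 0 := by rw [hw', hy']
      exact Set.mem_singleton_iff.mpr (up_inj N (by omega) 0 heq')
    · have hempty : {y' : EuclideanSpace ℝ (Fin (N-1)) | ¬ up N y' 0 ≠ x0} = ∅ := by
        ext y'
        simp only [Set.mem_setOf_eq, not_not, Set.mem_empty_iff_false, iff_false]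
        exact fun hy => hne ⟨y', hy⟩
      rw [hempty]
      exact measure_empty
  -- promotion step
  have promote : ∀ B : ℝ,
      (∃ c : ℝ≥0∞, c ≠ 0 ∧ ∀ y' : EuclideanSpace ℝ (Fin (N-1)),
        c * ENNReal.ofReal (1 + ‖y'‖) ^ (-B) ≤ Hu N p k u y') →
      (B ≤ 1 → False) ∧ (1 < B → LBnd N u (B - 1)) := by
    rintro B ⟨c, hc, hHu⟩
    constructor
    · intro hB1
      have hHu1 : ∀ᵐ y' ∂(volume : Measure (EuclideanSpace ℝ (Fin (N-1)))),
          c * ENNReal.ofReal (1 + ‖y'‖) ^ (-(1:ℝ)) ≤ Hu N p k u y' := by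
        refine Filter.Eventually.of_forall fun y' => le_trans (mul_le_mul_right ?_ c) (hHu y')
        apply ENNReal.rpow_le_rpow_of_exponent_le
        · exact ENNReal.one_le_ofReal.mpr (by linarith [norm_nonneg y'])
        · linarith
      haveI : (ae (volume.restrict (upperHalf N))).NeBot := by
        apply ae_neBot.mpr
        rw [Ne, Measure.restrict_eq_zero]
        exact hUHpos.ne'
      obtain ⟨x, hx⟩ := heq2.exists
      rw [div_top N hN hc hHu1 x, ENNReal.mul_top hclamE0] at hx
      exact ENNReal.ofReal_ne_top (top_le_iff.mp hx)
    · intro hB1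
      have hh : ∀ᵐ x ∂(volume.restrict (upperHalf N)),
          (∫⁻ y', ENNReal.ofReal ‖x - up N y' 0‖ ^ ((2:ℝ) - N) *
            (ENNReal.ofReal (2 * lam / (((N:ℝ) - 2) * sphereArea N)) * c *
              ENNReal.ofReal (1 + ‖y'‖) ^ (-B))) ≤ ENNReal.ofReal (u x) := by
        filter_upwards [heq2] with x hx
        refine le_trans ?_ hx
        rw [← lintegral_const_mul' _ _ ENNReal.ofReal_ne_top]
        apply lintegral_mono
        intro y'
        calc ENNReal.ofReal ‖x - up N y' 0‖ ^ ((2:ℝ) - N) *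
              (ENNReal.ofReal (2 * lam / (((N:ℝ) - 2) * sphereArea N)) * c *
                ENNReal.ofReal (1 + ‖y'‖) ^ (-B))
            = ENNReal.ofReal (2 * lam / (((N:ℝ) - 2) * sphereArea N)) *
              (ENNReal.ofReal ‖x - up N y' 0‖ ^ ((2:ℝ) - N) *
                (c * ENNReal.ofReal (1 + ‖y'‖) ^ (-B))) := by ring
          _ ≤ ENNReal.ofReal (2 * lam / (((N:ℝ) - 2) * sphereArea N)) *
              (ENNReal.ofReal ‖x - up N y' 0‖ ^ ((2:ℝ) - N) * Hu N p k u y') :=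
            mul_le_mul_right (mul_le_mul_right (hHu y') _) _
      have htr := trace_lb N hN u volume (fun y' => up N y' 0)
        (fun y' => ENNReal.ofReal (2 * lam / (((N:ℝ) - 2) * sphereArea N)) * c *
          ENNReal.ofReal (1 + ‖y'‖) ^ (-B))
        (fun x => kermeas x _ (((hWBmeas B).const_mul _)))
        hpos_up htrace hh
      have hcc : ENNReal.ofReal (2 * lam / (((N:ℝ) - 2) * sphereArea N)) * c ≠ 0 :=
        (ENNReal.mul_pos hclamE0 hc).ne'
      obtain ⟨c'', hc'', hbd⟩ := conv_lb (N-1) (by omega) (by linarith : (0:ℝ) ≤ B)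
        (by linarith : (0:ℝ) ≤ (N:ℝ) - 2) hcc
        (Filter.Eventually.of_forall fun z' => le_of_eq rfl)
      refine ⟨c'', hc'', ?_⟩
      filter_upwards [htr] with x' hx'
      have hcast : (((N:ℕ) - 1 : ℕ) : ℝ) = (N:ℝ) - 1 := by
        have h1 : (1:ℕ) ≤ N := by omega
        push_cast [Nat.cast_sub h1]
        ring
      have hexp : -(B + ((N:ℝ) - 2) - (((N:ℕ) - 1 : ℕ) : ℝ)) = -(B - 1) := by
        rw [hcast]; ring
      have h5 : (∫⁻ z', (ENNReal.ofReal (2 * lam / (((N:ℝ) - 2) * sphereArea N)) * c *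
            ENNReal.ofReal (1 + ‖z'‖) ^ (-B)) * ENNReal.ofReal ‖x' - z'‖ ^ (-((N:ℝ) - 2)))
          = ∫⁻ y', ENNReal.ofReal ‖up N x' 0 - up N y' 0‖ ^ ((2:ℝ) - N) *
              (ENNReal.ofReal (2 * lam / (((N:ℝ) - 2) * sphereArea N)) * c *
                ENNReal.ofReal (1 + ‖y'‖) ^ (-B)) := by
        apply lintegral_congr
        intro z'
        rw [norm_up_sub_up_zero N (by omega), show ((2:ℝ) - N) = -((N:ℝ) - 2) by ring,
          mul_comm]
      calc c'' * ENNReal.ofReal (1 + ‖x'‖) ^ (-(B - 1))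
          = c'' * ENNReal.ofReal (1 + ‖x'‖) ^ (-(B + ((N:ℝ) - 2) - (((N:ℕ) - 1 : ℕ) : ℝ))) := by
            rw [hexp]
        _ ≤ ∫⁻ z', (ENNReal.ofReal (2 * lam / (((N:ℝ) - 2) * sphereArea N)) * c *
              ENNReal.ofReal (1 + ‖z'‖) ^ (-B)) * ENNReal.ofReal ‖x' - z'‖ ^ (-((N:ℝ) - 2)) :=
            hbd x'
        _ = _ := h5
        _ ≤ ENNReal.ofReal (u (up N x' 0)) := hx'
  -- initial bound LBnd (N - 2)
  have hinit : LBnd N u ((N:ℝ) - 2) := by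
    have hFae : ∀ᵐ y ∂μ, y ∈ F := by
      rw [ae_iff]
      exact hFnull
    have hposμ : ∀ x0 : EuclideanSpace ℝ (Fin N), ht N x0 = 0 → ∀ᵐ y ∂μ, y ≠ x0 := by
      intro x0 hx0
      filter_upwards [hFae] with y hy
      intro hyx
      have := hFsub hy
      rw [hyx] at this
      have : 0 < ht N x0 := this
      linarith [this, hx0.le]
    have htrμ := trace_lb N hN u μ (fun y => y)
      (fun _ => ENNReal.ofReal (((N:ℝ) - 2) * sphereArea N)⁻¹)
      (fun x => (ENNReal.continuous_rpow_const.measurable.comp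
        (ENNReal.measurable_ofReal.comp
          ((continuous_const.sub continuous_id).norm.measurable))).mul_const _)
      hposμ htrace heq1
    obtain ⟨n, hn⟩ := exists_pos_ball (0 : EuclideanSpace ℝ (Fin N)) hμ0
    have hball : ∀ x' : EuclideanSpace ℝ (Fin (N-1)),
        ENNReal.ofReal (((N:ℝ) - 2) * sphereArea N)⁻¹
          * ENNReal.ofReal (((n:ℝ) + 1) * (1 + ‖x'‖)) ^ ((2:ℝ) - N)
          * μ (ball (0 : EuclideanSpace ℝ (Fin N)) n) ≤
        ∫⁻ y, ENNReal.ofReal ‖up N x' 0 - y‖ ^ ((2:ℝ) - N)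
          * ENNReal.ofReal (((N:ℝ) - 2) * sphereArea N)⁻¹ ∂μ := by
      intro x'
      have hx'1 : (0:ℝ) < 1 + ‖x'‖ := by linarith [norm_nonneg x']
      refine le_trans ?_ (setLIntegral_le_lintegral (ball (0 : EuclideanSpace ℝ (Fin N)) n) _)
      rw [← setLIntegral_const]
      apply lintegral_mono_ae
      filter_upwards [ae_restrict_mem measurableSet_ball] with y hy
      rw [mem_ball, dist_zero_right] at hy
      have hbnd : ‖up N x' 0 - y‖ ≤ ((n:ℝ) + 1) * (1 + ‖x'‖) := by
        have h1 := norm_sub_le (up N x' 0) y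
        rw [norm_up_zero N (by omega)] at h1
        nlinarith [norm_nonneg x', norm_nonneg y, Nat.cast_nonneg (α := ℝ) n]
      have hker : ENNReal.ofReal (((n:ℝ) + 1) * (1 + ‖x'‖)) ^ ((2:ℝ) - N) ≤
          ENNReal.ofReal ‖up N x' 0 - y‖ ^ ((2:ℝ) - N) :=
        ker_lb (by positivity) (norm_nonneg _) hbnd heN
      rw [mul_comm (ENNReal.ofReal (((N:ℝ) - 2) * sphereArea N)⁻¹)]
      exact mul_le_mul_left hker _
    refine ⟨ENNReal.ofReal (((N:ℝ) - 2) * sphereArea N)⁻¹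
      * ENNReal.ofReal ((n:ℝ) + 1) ^ ((2:ℝ) - N)
      * μ (ball (0 : EuclideanSpace ℝ (Fin N)) n), ?_, ?_⟩
    · exact (ENNReal.mul_pos (ENNReal.mul_pos hc₀E0 (ker_ne_zero heN)).ne' hn.ne').ne'
    · filter_upwards [htrμ] with x' hx'
      have hx'1 : (0:ℝ) < 1 + ‖x'‖ := by linarith [norm_nonneg x']
      have hsplit : ENNReal.ofReal (((n:ℝ) + 1) * (1 + ‖x'‖)) ^ ((2:ℝ) - N)
          = ENNReal.ofReal ((n:ℝ) + 1) ^ ((2:ℝ) - N)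
            * ENNReal.ofReal (1 + ‖x'‖) ^ ((2:ℝ) - N) := by
        rw [ENNReal.ofReal_mul (by positivity),
          ENNReal.mul_rpow_of_ne_top ENNReal.ofReal_ne_top ENNReal.ofReal_ne_top]
      calc ENNReal.ofReal (((N:ℝ) - 2) * sphereArea N)⁻¹
            * ENNReal.ofReal ((n:ℝ) + 1) ^ ((2:ℝ) - N)
            * μ (ball (0 : EuclideanSpace ℝ (Fin N)) n)
            * ENNReal.ofReal (1 + ‖x'‖) ^ (-((N:ℝ) - 2))
          = ENNReal.ofReal (((N:ℝ) - 2) * sphereArea N)⁻¹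
            * ENNReal.ofReal (((n:ℝ) + 1) * (1 + ‖x'‖)) ^ ((2:ℝ) - N)
            * μ (ball (0 : EuclideanSpace ℝ (Fin N)) n) := by
            rw [hsplit, show -((N:ℝ) - 2) = (2:ℝ) - N by ring]
            ring
        _ ≤ ∫⁻ y, ENNReal.ofReal ‖up N x' 0 - y‖ ^ ((2:ℝ) - N)
              * ENNReal.ofReal (((N:ℝ) - 2) * sphereArea N)⁻¹ ∂μ := hball x'
        _ ≤ ENNReal.ofReal (u (up N x' 0)) := hx'
  -- iteration
  set g : ℕ → ℝ := fun n => Nat.rec (k - 1) (fun _ x => p * x - ((N:ℝ) - k)) n with hg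
  have hg0 : g 0 = k - 1 := rfl
  have hgrec : ∀ n, g (n + 1) = p * g n - ((N:ℝ) - k) := fun n => rfl
  have key : ∀ n, 0 ≤ g n ∧ LBnd N u (g n) := by
    intro n
    induction n with
    | zero =>
      refine ⟨by rw [hg0]; linarith, ?_⟩
      obtain ⟨c, hc, hHu⟩ := Hu_lb2 N hN p k u hp0 (by linarith) (by linarith) hinit
      have := (promote k ⟨c, hc, hHu⟩).2 hk1
      rwa [hg0]
    | succ m ih =>
      obtain ⟨hge, hLB⟩ := ih
      obtain ⟨c, hc, hHu⟩ := Hu_lb N hN p k u hp0 (by linarith) hge hLB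
      have hprom := promote (p * g m + k - ((N:ℝ) - 1)) ⟨c, hc, hHu⟩
      rcases le_or_gt (p * g m + k - ((N:ℝ) - 1)) 1 with hle | hgt
      · exact absurd hle (fun h => hprom.1 h)
      · have hLB' := hprom.2 hgt
        have hg1 : g (m + 1) = p * g m + k - ((N:ℝ) - 1) - 1 := by
          rw [hgrec m]; ring
        constructor
        · rw [hg1]; linarith
        · rwa [hg1]
  exact exists_iter_neg hp0 hk1 hkN
    ((lt_div_iff₀ (by linarith : (0:ℝ) < k - 1)).mp hp) g hg0 hgrec (fun n => (key n).1)


end
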